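/- Let G be a connected weighted graph on n ≥ 2 vertices with positive edge weights, let w_min and w_max be the minimum and maximum edge weights, and let α = w_max/w_min. Then: (i) for every vector x ∈ ℝⁿ with xᵀ𝟙 = 0 one has (w_min/(2n⁴α²))·‖x‖_∞² ≤ xᵀ L_G x ≤ n²·w_max·‖x‖_∞²; and (ii) for every vector b ∈ ℝⁿ with bᵀ𝟙 = 0 one has (1/(n²·w_max))·‖b‖_∞² ≤ bᵀ L_G† b ≤ (2n⁴α²/w_min)·‖b‖_∞². -/

import Mathlib

open Matrix Finset

lemma mulVecL {n : ℕ} (w : Fin n → Fin n → ℝ) (L : Matrix (Fin n) (Fin n) ℝ)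
    (hL : ∀ u v, L u v = if u = v then ∑ s ∈ univ.erase u, w u s else - w u v)
    (x : Fin n → ℝ) (u : Fin n) :
    L.mulVec x u = ∑ v, w u v * (x u - x v) := by
  have h1 : ∑ v ∈ univ.erase u, w u v * (x u - x v) + w u u * (x u - x u)
      = ∑ v, w u v * (x u - x v) := Finset.sum_erase_add _ _ (mem_univ u)
  rw [Matrix.mulVec, dotProduct]
  rw [← Finset.sum_erase_add univ _ (mem_univ u)]
  rw [← h1]
  simp only [hL, if_pos rfl, eq_self_iff_true, if_true, sub_self, mul_zero, add_zero]
  rw [Finset.sum_mul _ _ (x u), ← Finset.sum_add_distrib]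
  apply Finset.sum_congr rfl
  intro v hv
  rw [if_neg (Finset.ne_of_mem_erase hv).symm]
  ring

lemma quadL {n : ℕ} (w : Fin n → Fin n → ℝ) (hsymm : ∀ u v, w u v = w v u)
    (L : Matrix (Fin n) (Fin n) ℝ)
    (hL : ∀ u v, L u v = if u = v then ∑ s ∈ univ.erase u, w u s else - w u v)
    (x : Fin n → ℝ) :
    x ⬝ᵥ L.mulVec x = (∑ u, ∑ v, w u v * (x u - x v) ^ 2) / 2 := by
  have h1 : x ⬝ᵥ L.mulVec x = ∑ u, ∑ v, w u v * (x u * (x u - x v)) := by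
    rw [dotProduct]
    apply Finset.sum_congr rfl
    intro u _
    rw [mulVecL w L hL, Finset.mul_sum]
    exact Finset.sum_congr rfl fun v _ => by ring
  have h2 : x ⬝ᵥ L.mulVec x = ∑ u, ∑ v, w u v * (x v * (x v - x u)) := by
    rw [h1, Finset.sum_comm]
    exact Finset.sum_congr rfl fun v _ => Finset.sum_congr rfl fun u _ => by rw [hsymm]
  have h3 : (∑ u, ∑ v, w u v * (x u - x v) ^ 2) = x ⬝ᵥ L.mulVec x * 2 := by
    calc (∑ u, ∑ v, w u v * (x u - x v) ^ 2)
        = ∑ u, ∑ v, (w u v * (x u * (x u - x v)) + w u v * (x v * (x v - x u))) :=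
          Finset.sum_congr rfl fun u _ => Finset.sum_congr rfl fun v _ => by ring
      _ = (∑ u, ∑ v, w u v * (x u * (x u - x v))) + ∑ u, ∑ v, w u v * (x v * (x v - x u)) := by
          rw [← Finset.sum_add_distrib]
          exact Finset.sum_congr rfl fun u _ => Finset.sum_add_distrib
      _ = x ⬝ᵥ L.mulVec x * 2 := by rw [← h1, ← h2]; ring
  rw [h3]; ring

lemma walk_edge {n : ℕ} (G' : SimpleGraph (Fin n)) (x : Fin n → ℝ)
    (e0 : ∃ a b, G'.Adj a b) {i j : Fin n} (p : G'.Walk i j) :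
    ∃ u v, G'.Adj u v ∧ x i - x j ≤ (p.length : ℝ) * |x u - x v| := by
  induction p with
  | nil =>
    obtain ⟨a, b, hab⟩ := e0
    exact ⟨a, b, hab, by simp⟩
  | @cons a c b h q ih =>
    obtain ⟨u, v, huv, hle⟩ := ih
    simp only [SimpleGraph.Walk.length_cons]
    push_cast
    rcases le_total |x a - x c| |x u - x v| with hc | hc
    · refine ⟨u, v, huv, ?_⟩
      nlinarith [le_abs_self (x a - x c), abs_nonneg (x u - x v)]
    · refine ⟨a, c, h, ?_⟩
      nlinarith [le_abs_self (x a - x c), abs_nonneg (x a - x c),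
        Nat.cast_nonneg (α := ℝ) q.length]
lemma quad_nonneg {n : ℕ} (w : Fin n → Fin n → ℝ) (hsymm : ∀ u v, w u v = w v u)
    (hnonneg : ∀ u v, 0 ≤ w u v)
    (L : Matrix (Fin n) (Fin n) ℝ)
    (hL : ∀ u v, L u v = if u = v then ∑ s ∈ univ.erase u, w u s else - w u v)
    (x : Fin n → ℝ) : 0 ≤ x ⬝ᵥ L.mulVec x := by
  rw [quadL w hsymm L hL]
  apply div_nonneg _ (by norm_num)
  exact Finset.sum_nonneg fun u _ => Finset.sum_nonneg fun v _ =>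
    mul_nonneg (hnonneg u v) (sq_nonneg _)

lemma lowerL {n : ℕ} (hn : 2 ≤ n) (w : Fin n → Fin n → ℝ)
    (hsymm : ∀ u v, w u v = w v u) (hnonneg : ∀ u v, 0 ≤ w u v)
    (hconn : (SimpleGraph.fromRel fun u v : Fin n => 0 < w u v).Connected)
    (wmin : ℝ)
    (hwmin : IsLeast {r : ℝ | ∃ u v : Fin n, u ≠ v ∧ 0 < w u v ∧ w u v = r} wmin)
    (L : Matrix (Fin n) (Fin n) ℝ)
    (hL : ∀ u v, L u v = if u = v then ∑ s ∈ univ.erase u, w u s else - w u v)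
    (x : Fin n → ℝ) (hx : ∑ i, x i = 0) :
    wmin * ‖x‖ ^ 2 / (n : ℝ) ^ 2 ≤ x ⬝ᵥ L.mulVec x := by
  haveI : NeZero n := ⟨by omega⟩
  obtain ⟨i, hi⟩ := Finite.exists_max x
  obtain ⟨j, hj⟩ := Finite.exists_min x
  have hnpos : (0 : ℝ) < n := by positivity
  have hxi : 0 ≤ x i := by
    by_contra hlt
    push_neg at hlt
    have : ∑ k, x k < 0 := by
      calc ∑ k, x k ≤ ∑ _k : Fin n, x i := Finset.sum_le_sum fun k _ => hi k
        _ = n * x i := by rw [Finset.sum_const, card_univ, Fintype.card_fin, nsmul_eq_mul]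
        _ < 0 := by nlinarith
    linarith [hx ▸ this]
  have hxj : x j ≤ 0 := by
    by_contra hlt
    push_neg at hlt
    have : 0 < ∑ k, x k := by
      calc (0:ℝ) < n * x j := by nlinarith
        _ = ∑ _k : Fin n, x j := by rw [Finset.sum_const, card_univ, Fintype.card_fin, nsmul_eq_mul]
        _ ≤ ∑ k, x k := Finset.sum_le_sum fun k _ => hj k
    linarith [hx ▸ this]
  have hnorm : ‖x‖ ≤ x i - x j := by
    rw [pi_norm_le_iff_of_nonneg (by linarith)]
    intro k
    rw [Real.norm_eq_abs, abs_le]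
    exact ⟨by linarith [hj k], by linarith [hi k]⟩
  obtain ⟨a, b, hab, hpos, _⟩ := hwmin.1
  have e0 : ∃ a b, (SimpleGraph.fromRel fun u v : Fin n => 0 < w u v).Adj a b :=
    ⟨a, b, (SimpleGraph.fromRel_adj _ _ _).2 ⟨hab, Or.inl hpos⟩⟩
  obtain ⟨p0⟩ := hconn.preconnected i j
  obtain ⟨u, v, huv, hle⟩ := walk_edge _ x e0 p0.bypass
  rw [SimpleGraph.fromRel_adj] at huv
  obtain ⟨hne, hor⟩ := huv
  have hwuv : 0 < w u v := by
    rcases hor with h | h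
    · exact h
    · rwa [hsymm]
  have hlen : (p0.bypass.length : ℝ) ≤ n := by
    have := p0.bypass_isPath.length_lt
    rw [Fintype.card_fin] at this
    exact_mod_cast this.le
  have hd : ‖x‖ ≤ (n : ℝ) * |x u - x v| :=
    hnorm.trans (hle.trans (mul_le_mul_of_nonneg_right hlen (abs_nonneg _)))
  have hwm : wmin ≤ w u v := hwmin.2 ⟨u, v, hne, hwuv, rfl⟩
  have hwminpos : 0 < wmin := by
    obtain ⟨a', b', _, hp, he⟩ := hwmin.1
    exact he ▸ hp
  -- extraction of the edge term
  set f : Fin n → Fin n → ℝ := fun a b => w a b * (x a - x b) ^ 2 with hf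
  have hfnn : ∀ a b, 0 ≤ f a b := fun a b => mul_nonneg (hnonneg a b) (sq_nonneg _)
  have hext : f u v + f v u ≤ ∑ a, ∑ b, f a b := by
    calc f u v + f v u
        ≤ (∑ b, f u b) + ∑ b, f v b := by
          gcongr
          · exact Finset.single_le_sum (fun k _ => hfnn u k) (mem_univ v)
          · exact Finset.single_le_sum (fun k _ => hfnn v k) (mem_univ u)
      _ = ∑ a ∈ {u, v}, ∑ b, f a b := (Finset.sum_pair (f := fun a => ∑ b, f a b) hne).symm
      _ ≤ ∑ a, ∑ b, f a b := Finset.sum_le_sum_of_subset_of_nonneg (subset_univ _)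
          (fun a _ _ => Finset.sum_nonneg fun b _ => hfnn a b)
  have hquad : w u v * (x u - x v) ^ 2 ≤ x ⬝ᵥ L.mulVec x := by
    rw [quadL w hsymm L hL]
    have : f u v + f v u = 2 * (w u v * (x u - x v) ^ 2) := by
      simp only [hf]
      rw [hsymm v u]
      ring
    linarith
  have h2 : ‖x‖ ^ 2 ≤ (n : ℝ) ^ 2 * (x u - x v) ^ 2 := by
    nlinarith [norm_nonneg x, hd, sq_abs (x u - x v), abs_nonneg (x u - x v)]
  rw [div_le_iff₀ (by positivity)]
  nlinarith [mul_le_mul_of_nonneg_left h2 hwminpos.le,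
    mul_le_mul_of_nonneg_right hwm (by positivity : (0:ℝ) ≤ (n:ℝ)^2 * (x u - x v)^2)]

lemma upperL {n : ℕ} (w : Fin n → Fin n → ℝ)
    (hsymm : ∀ u v, w u v = w v u) (hnonneg : ∀ u v, 0 ≤ w u v)
    (wmax : ℝ) (hwmaxpos : 0 < wmax)
    (hwmax : ∀ u v : Fin n, u ≠ v → w u v ≤ wmax)
    (L : Matrix (Fin n) (Fin n) ℝ)
    (hL : ∀ u v, L u v = if u = v then ∑ s ∈ univ.erase u, w u s else - w u v)
    (x : Fin n → ℝ) (hx : ∑ i, x i = 0) :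
    x ⬝ᵥ L.mulVec x ≤ (n : ℝ) ^ 2 * wmax * ‖x‖ ^ 2 := by
  rw [quadL w hsymm L hL]
  have step1 : ∑ u, ∑ v, w u v * (x u - x v) ^ 2 ≤ ∑ u, ∑ v, wmax * (x u - x v) ^ 2 := by
    apply Finset.sum_le_sum
    intro u _
    apply Finset.sum_le_sum
    intro v _
    by_cases h : u = v
    · subst h; simp
    · exact mul_le_mul_of_nonneg_right (hwmax u v h) (sq_nonneg _)
  have hxs : ∀ u : Fin n, (x u) ^ 2 ≤ ‖x‖ ^ 2 := by
    intro u
    have h1 : |x u| ≤ ‖x‖ := by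
      have := norm_le_pi_norm x u
      rwa [Real.norm_eq_abs] at this
    nlinarith [abs_nonneg (x u), sq_abs (x u)]
  have hident : ∑ u, ∑ v, (x u - x v) ^ 2 = 2 * n * ∑ u, (x u) ^ 2 := by
    have hinner : ∀ u : Fin n, ∑ v, (x u - x v) ^ 2
        = n * (x u) ^ 2 - 2 * x u * (∑ v, x v) + ∑ v, (x v) ^ 2 := by
      intro u
      have : ∀ v : Fin n, (x u - x v) ^ 2 = (x u)^2 - 2 * x u * x v + (x v)^2 :=
        fun v => by ring
      simp only [this]
      rw [Finset.sum_add_distrib, Finset.sum_sub_distrib, Finset.sum_const, card_univ,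
        Fintype.card_fin, ← Finset.mul_sum, nsmul_eq_mul]
    simp only [hinner, hx]
    rw [Finset.sum_add_distrib, Finset.sum_sub_distrib, Finset.sum_const, card_univ,
      Fintype.card_fin, nsmul_eq_mul, ← Finset.mul_sum]
    simp only [hx, mul_zero, Finset.sum_const_zero]
    ring
  have hsum2 : ∑ u, (x u) ^ 2 ≤ n * ‖x‖ ^ 2 := by
    calc ∑ u, (x u) ^ 2 ≤ ∑ _u : Fin n, ‖x‖ ^ 2 := Finset.sum_le_sum fun u _ => hxs u
      _ = n * ‖x‖ ^ 2 := by rw [Finset.sum_const, card_univ, Fintype.card_fin, nsmul_eq_mul]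
  calc (∑ u, ∑ v, w u v * (x u - x v) ^ 2) / 2
      ≤ (∑ u, ∑ v, wmax * (x u - x v) ^ 2) / 2 := by linarith
    _ = wmax * (∑ u, ∑ v, (x u - x v) ^ 2) / 2 := by
        congr 1
        rw [Finset.mul_sum]
        exact Finset.sum_congr rfl fun u _ => (Finset.mul_sum _ _ _).symm
    _ = wmax * n * ∑ u, (x u) ^ 2 := by rw [hident]; ring
    _ ≤ (n : ℝ) ^ 2 * wmax * ‖x‖ ^ 2 := by nlinarith [mul_le_mul_of_nonneg_left hsum2 (show (0:ℝ) ≤ wmax * n by positivity)]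

lemma sumLzero {n : ℕ} (w : Fin n → Fin n → ℝ) (hsymm : ∀ u v, w u v = w v u)
    (L : Matrix (Fin n) (Fin n) ℝ)
    (hL : ∀ u v, L u v = if u = v then ∑ s ∈ univ.erase u, w u s else - w u v)
    (y : Fin n → ℝ) : ∑ u, L.mulVec y u = 0 := by
  have h : ∑ u, L.mulVec y u = ∑ u, ∑ v, w u v * (y u - y v) := by
    exact Finset.sum_congr rfl fun u _ => mulVecL w L hL y u
  have h2 : ∑ u, ∑ v, w u v * (y u - y v) = - ∑ u, ∑ v, w u v * (y u - y v) := by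
    conv_lhs => rw [Finset.sum_comm]
    rw [← Finset.sum_neg_distrib]
    apply Finset.sum_congr rfl
    intro a _
    rw [← Finset.sum_neg_distrib]
    apply Finset.sum_congr rfl
    intro c _
    rw [hsymm]
    ring
  rw [h]
  linarith

set_option maxHeartbeats 1000000 in
theorem stmt_0 (n : ℕ) (hn : 2 ≤ n)
    (w : Fin n → Fin n → ℝ)
    (hsymm : ∀ u v, w u v = w v u)
    (hnonneg : ∀ u v, 0 ≤ w u v)
    (hconn : (SimpleGraph.fromRel fun u v : Fin n => 0 < w u v).Connected)
    (wmin wmax : ℝ)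
    (hwmin : IsLeast {r : ℝ | ∃ u v : Fin n, u ≠ v ∧ 0 < w u v ∧ w u v = r} wmin)
    (hwmax : IsGreatest {r : ℝ | ∃ u v : Fin n, u ≠ v ∧ 0 < w u v ∧ w u v = r} wmax)
    (α : ℝ) (hα : α = wmax / wmin)
    (L : Matrix (Fin n) (Fin n) ℝ)
    (hL : ∀ u v, L u v = if u = v then ∑ s ∈ univ.erase u, w u s else - w u v)
    (H : Matrix (Fin n) (Fin n) ℝ)
    (hH1 : L * H * L = L) (hH2 : H * L * H = H)
    (hH3 : (L * H)ᵀ = L * H) (hH4 : (H * L)ᵀ = H * L) :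
    (∀ x : Fin n → ℝ, ∑ i, x i = 0 →
        wmin / (2 * (n : ℝ) ^ 4 * α ^ 2) * ‖x‖ ^ 2 ≤ x ⬝ᵥ L.mulVec x ∧
        x ⬝ᵥ L.mulVec x ≤ (n : ℝ) ^ 2 * wmax * ‖x‖ ^ 2) ∧
    (∀ b : Fin n → ℝ, ∑ i, b i = 0 →
        1 / ((n : ℝ) ^ 2 * wmax) * ‖b‖ ^ 2 ≤ b ⬝ᵥ H.mulVec b ∧
        b ⬝ᵥ H.mulVec b ≤ 2 * (n : ℝ) ^ 4 * α ^ 2 / wmin * ‖b‖ ^ 2) := by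
  have hwminpos : 0 < wmin := by
    obtain ⟨a', b', _, hp, he⟩ := hwmin.1
    exact he ▸ hp
  have hwmaxpos : 0 < wmax := by
    obtain ⟨a', b', _, hp, he⟩ := hwmax.1
    exact he ▸ hp
  have hwmaxle : ∀ u v : Fin n, u ≠ v → w u v ≤ wmax := by
    intro u v huv
    by_cases hp : 0 < w u v
    · exact hwmax.2 ⟨u, v, huv, hp, rfl⟩
    · push_neg at hp
      linarith
  have hα1 : 1 ≤ α := by
    have h1 : wmin ≤ wmax := hwmax.2 hwmin.1
    rw [hα, le_div_iff₀ hwminpos]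
    linarith
  have hn2 : (2 : ℝ) ≤ (n : ℝ) := by exact_mod_cast hn
  have hnpos : (0 : ℝ) < n := by linarith
  have key_low : ∀ x : Fin n → ℝ, ∑ i, x i = 0 →
      wmin * ‖x‖ ^ 2 / (n : ℝ) ^ 2 ≤ x ⬝ᵥ L.mulVec x :=
    fun x hx => lowerL hn w hsymm hnonneg hconn wmin hwmin L hL x hx
  have key_up : ∀ x : Fin n → ℝ, ∑ i, x i = 0 →
      x ⬝ᵥ L.mulVec x ≤ (n : ℝ) ^ 2 * wmax * ‖x‖ ^ 2 :=
    fun x hx => upperL w hsymm hnonneg wmax hwmaxpos hwmaxle L hL x hx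
  have hαsq : 1 ≤ α ^ 2 := by nlinarith
  have h24 : (n : ℝ) ^ 2 ≤ (n : ℝ) ^ 4 := by
    nlinarith [mul_self_nonneg ((n:ℝ) - 2), sq_nonneg (n:ℝ), mul_nonneg (mul_nonneg hnpos.le hnpos.le) hnpos.le]
  have hden : (n : ℝ) ^ 2 ≤ 2 * (n : ℝ) ^ 4 * α ^ 2 := by
    nlinarith [mul_nonneg (pow_nonneg hnpos.le 4) (sub_nonneg.mpr hαsq), h24]
  haveI : Nonempty (Fin n) := ⟨⟨0, by omega⟩⟩
  have Lsym : Lᵀ = L := by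
    ext u v
    show L v u = L u v
    by_cases h : u = v
    · subst h; rfl
    · rw [hL, hL, if_neg (Ne.symm h), if_neg h, hsymm]
  constructor
  · intro x hx
    refine ⟨?_, key_up x hx⟩
    calc wmin / (2 * (n : ℝ) ^ 4 * α ^ 2) * ‖x‖ ^ 2
        ≤ wmin * ‖x‖ ^ 2 / (n : ℝ) ^ 2 := by
          rw [div_mul_eq_mul_div, div_le_div_iff₀ (by positivity) (by positivity)]
          nlinarith [sq_nonneg ‖x‖, mul_nonneg hwminpos.le (sq_nonneg ‖x‖)]
      _ ≤ x ⬝ᵥ L.mulVec x := key_low x hx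
  · intro b hb
    -- step 1: (L*H) *ᵥ b = b
    have hPsym : ∀ (z y : Fin n → ℝ), ((L * H) *ᵥ z) ⬝ᵥ y = z ⬝ᵥ ((L * H) *ᵥ y) := by
      intro z y
      calc ((L * H) *ᵥ z) ⬝ᵥ y = y ⬝ᵥ ((L * H) *ᵥ z) := dotProduct_comm _ _
        _ = (y ᵥ* (L * H)) ⬝ᵥ z := Matrix.dotProduct_mulVec _ _ _
        _ = ((L * H) *ᵥ y) ⬝ᵥ z := by
            have h1 : y ᵥ* (L * H) = y ᵥ* (L * H)ᵀ := by rw [hH3]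
            rw [h1, Matrix.vecMul_transpose]
        _ = z ⬝ᵥ ((L * H) *ᵥ y) := dotProduct_comm _ _
    set r : Fin n → ℝ := b - (L * H) *ᵥ b with hrdef
    have hsumr : ∑ u, r u = 0 := by
      simp only [hrdef, Pi.sub_apply, Finset.sum_sub_distrib, hb]
      have : (L * H) *ᵥ b = L *ᵥ (H *ᵥ b) := (Matrix.mulVec_mulVec _ _ _).symm
      rw [this, sumLzero w hsymm L hL]
      ring
    have hrLr : r ⬝ᵥ L.mulVec r = 0 := by
      have h1 : r ⬝ᵥ L.mulVec r = b ⬝ᵥ (L *ᵥ r) - ((L * H) *ᵥ b) ⬝ᵥ (L *ᵥ r) := by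
        simp only [hrdef]
        rw [sub_dotProduct]
      have h2 : ((L * H) *ᵥ b) ⬝ᵥ (L *ᵥ r) = b ⬝ᵥ (L *ᵥ r) := by
        rw [hPsym b (L *ᵥ r)]
        congr 1
        rw [Matrix.mulVec_mulVec, hH1]
      rw [h1, h2]
      ring
    have hr0 : r = 0 := by
      have hlow := key_low r hsumr
      rw [hrLr] at hlow
      have hnr : ‖r‖ = 0 := by
        by_contra hne
        have : 0 < ‖r‖ := lt_of_le_of_ne (norm_nonneg r) (Ne.symm hne)
        have : 0 < wmin * ‖r‖ ^ 2 / (n : ℝ) ^ 2 := by positivity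
        linarith
      exact norm_eq_zero.mp hnr
    have hLH : (L * H) *ᵥ b = b := by
      have := sub_eq_zero.mp hr0
      -- r = b - (L*H) *ᵥ b = 0
      rw [hrdef] at hr0
      have := sub_eq_zero.mp hr0
      exact this.symm
    set y : Fin n → ℝ := H *ᵥ b with hydef
    have hLy : L *ᵥ y = b := by
      rw [hydef, Matrix.mulVec_mulVec, hLH]
    set c : ℝ := (∑ u, y u) / n with hcdef
    set ybar : Fin n → ℝ := fun u => y u - c with hybardef
    have hsumybar : ∑ u, ybar u = 0 := by
      simp only [hybardef, Finset.sum_sub_distrib, Finset.sum_const, card_univ,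
        Fintype.card_fin, nsmul_eq_mul, hcdef]
      field_simp
      ring
    have hLybar : L *ᵥ ybar = b := by
      funext u
      rw [← hLy]
      rw [mulVecL w L hL, mulVecL w L hL]
      exact Finset.sum_congr rfl fun v _ => by simp only [hybardef]; ring
    have hQ1 : b ⬝ᵥ H.mulVec b = ybar ⬝ᵥ b := by
      have h1 : ybar ⬝ᵥ b = y ⬝ᵥ b - c * ∑ u, b u := by
        simp only [hybardef, dotProduct, sub_mul, Finset.sum_sub_distrib, Finset.mul_sum]
      rw [h1, hb, mul_zero, sub_zero, dotProduct_comm]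
    have hQ2 : b ⬝ᵥ H.mulVec b = ybar ⬝ᵥ L.mulVec ybar := by
      rw [hQ1]
      congr 1
      exact hLybar.symm
    set Q : ℝ := ybar ⬝ᵥ L.mulVec ybar with hQdef
    have hQnn : 0 ≤ Q := quad_nonneg w hsymm hnonneg L hL ybar
    constructor
    · -- lower bound for part ii
      obtain ⟨i, hi⟩ := Finite.exists_max (fun k => |b k|)
      have hbnorm : ‖b‖ = |b i| := by
        apply le_antisymm
        · rw [pi_norm_le_iff_of_nonneg (abs_nonneg _)]
          intro k
          rw [Real.norm_eq_abs]
          exact hi k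
        · have := norm_le_pi_norm b i
          rwa [Real.norm_eq_abs] at this
      set u0 : Fin n → ℝ := fun k => (if k = i then 1 else 0) - 1 / n with hu0def
      have hsumu : ∑ k, u0 k = 0 := by
        simp only [hu0def, Finset.sum_sub_distrib, Finset.sum_ite_eq', mem_univ, if_pos,
          Finset.sum_const, card_univ, Fintype.card_fin, nsmul_eq_mul]
        field_simp
        ring
      have hu0norm : ‖u0‖ ≤ 1 := by
        rw [pi_norm_le_iff_of_nonneg zero_le_one]
        intro k
        rw [Real.norm_eq_abs, abs_le]
        have h1n : 1 / (n : ℝ) ≤ 1 := by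
          rw [div_le_one hnpos]; linarith
        have h1n' : 0 < 1 / (n : ℝ) := by positivity
        have hval : u0 k = (if k = i then 1 else 0) - 1 / n := rfl
        by_cases h : k = i
        · rw [hval, if_pos h]
          constructor <;> linarith
        · rw [hval, if_neg h]
          constructor <;> linarith
      have hbu : b ⬝ᵥ u0 = b i := by
        have h1 : b ⬝ᵥ u0 = (∑ k, b k * (if k = i then 1 else 0)) - (∑ k, b k) * (1 / n) := by
          simp only [hu0def, dotProduct, mul_sub, Finset.sum_sub_distrib, Finset.sum_mul]
        rw [h1, hb]
        simp [mul_ite]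
      have hsymbil : u0 ⬝ᵥ (L *ᵥ ybar) = ybar ⬝ᵥ (L *ᵥ u0) := by
        rw [Matrix.dotProduct_mulVec u0 L ybar]
        have h1 : u0 ᵥ* L = L *ᵥ u0 := by
          have h2 : u0 ᵥ* L = u0 ᵥ* Lᵀ := by rw [Lsym]
          rw [h2, Matrix.vecMul_transpose]
        rw [h1, dotProduct_comm]
      have hbilin : ybar ⬝ᵥ (L *ᵥ u0) = b i := by
        rw [← hsymbil, hLybar, dotProduct_comm]
        exact hbu
      have hCS : (b i) ^ 2 ≤ Q * (u0 ⬝ᵥ L.mulVec u0) := by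
        have hexp : ∀ t : ℝ, 0 ≤ (u0 ⬝ᵥ L.mulVec u0) * (t * t)
            + (2 * (ybar ⬝ᵥ L.mulVec u0)) * t + Q := by
          intro t
          have hq := quad_nonneg w hsymm hnonneg L hL (ybar + t • u0)
          have hexpand : (ybar + t • u0) ⬝ᵥ L.mulVec (ybar + t • u0)
              = (u0 ⬝ᵥ L.mulVec u0) * (t * t) + (2 * (ybar ⬝ᵥ L.mulVec u0)) * t
                + ybar ⬝ᵥ L.mulVec ybar := by
            rw [Matrix.mulVec_add, Matrix.mulVec_smul, dotProduct_add, add_dotProduct,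
              add_dotProduct, dotProduct_smul, dotProduct_smul, smul_dotProduct,
              smul_dotProduct]
            simp only [smul_eq_mul]
            rw [hsymbil]
            ring
          rw [hexpand] at hq
          rw [hQdef]
          linarith
        have hd := discrim_le_zero hexp
        rw [discrim] at hd
        rw [hbilin] at hd
        nlinarith [hd]
      have huup : u0 ⬝ᵥ L.mulVec u0 ≤ (n : ℝ) ^ 2 * wmax := by
        have h2 : ‖u0‖ ^ 2 ≤ 1 := pow_le_one₀ (norm_nonneg u0) hu0norm
        exact (key_up u0 hsumu).trans (mul_le_of_le_one_right (by positivity) h2)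
      rw [hQ2]
      rw [div_mul_eq_mul_div, one_mul, div_le_iff₀ (by positivity)]
      have hb2 : ‖b‖ ^ 2 = (b i) ^ 2 := by rw [hbnorm, sq_abs]
      rw [hb2]
      exact hCS.trans (mul_le_mul_of_nonneg_left huup hQnn)
    · -- upper bound for part ii
      have hQlow := key_low ybar hsumybar
      have hQb : Q ≤ (n : ℝ) * (‖ybar‖ * ‖b‖) := by
        have h1 : Q = ybar ⬝ᵥ b := by rw [← hQ1, hQ2]
        rw [h1, dotProduct]
        calc ∑ k, ybar k * b k ≤ ∑ k, ‖ybar‖ * ‖b‖ := by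
              apply Finset.sum_le_sum
              intro k _
              have h2 : |ybar k| ≤ ‖ybar‖ := by
                have := norm_le_pi_norm ybar k; rwa [Real.norm_eq_abs] at this
              have h3 : |b k| ≤ ‖b‖ := by
                have := norm_le_pi_norm b k; rwa [Real.norm_eq_abs] at this
              calc ybar k * b k ≤ |ybar k * b k| := le_abs_self _
                _ = |ybar k| * |b k| := abs_mul _ _
                _ ≤ ‖ybar‖ * ‖b‖ := by
                    apply mul_le_mul h2 h3 (abs_nonneg _) (norm_nonneg _)
          _ = (n : ℝ) * (‖ybar‖ * ‖b‖) := by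
              rw [Finset.sum_const, card_univ, Fintype.card_fin, nsmul_eq_mul]
      rw [hQ2]
      rcases eq_or_lt_of_le hQnn with h0 | h0
      · rw [← h0]
        positivity
      · have hyb2 : wmin * ‖ybar‖ ^ 2 ≤ Q * (n : ℝ) ^ 2 := by
          rw [div_le_iff₀ (by positivity)] at hQlow
          linarith
        have e1 : Q ^ 2 ≤ (n : ℝ) ^ 2 * ‖ybar‖ ^ 2 * ‖b‖ ^ 2 := by
          nlinarith [mul_nonneg (norm_nonneg ybar) (norm_nonneg b), hQnn]
        have e2 : wmin * Q ^ 2 ≤ (n : ℝ) ^ 2 * (Q * (n : ℝ) ^ 2) * ‖b‖ ^ 2 := by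
          nlinarith [sq_nonneg ‖b‖, mul_nonneg (sq_nonneg (n : ℝ)) (sq_nonneg ‖b‖)]
        have e3 : Q ≤ (n : ℝ) ^ 4 / wmin * ‖b‖ ^ 2 := by
          rw [div_mul_eq_mul_div, le_div_iff₀ hwminpos]
          have := (mul_le_mul_iff_of_pos_right h0).mpr (le_refl Q)
          nlinarith [e2, h0]
        calc Q ≤ (n : ℝ) ^ 4 / wmin * ‖b‖ ^ 2 := e3
          _ ≤ 2 * (n : ℝ) ^ 4 * α ^ 2 / wmin * ‖b‖ ^ 2 := by
              have hcoe : (n : ℝ) ^ 4 ≤ 2 * (n : ℝ) ^ 4 * α ^ 2 := by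
                nlinarith [mul_nonneg (pow_nonneg hnpos.le 4) (sub_nonneg.mpr hαsq)]
              gcongr
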